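/- For all real numbers x ≥ 0 and y ≥ 0 one has 2·g(x,0)·[Φ(x) − Φ(x−y)] ≤ f(x,y) ≤ 2·g(x,y)·[Φ(x) − Φ(x−y)]. -/

import Mathlib

open Real Filter MeasureTheory

/-- Standard normal density. -/
noncomputable def stdPhi (u : ℝ) : ℝ := (Real.sqrt (2 * Real.pi))⁻¹ * Real.exp (-u ^ 2 / 2)

/-- Standard normal distribution function. -/
noncomputable def stdCdf (u : ℝ) : ℝ := ∫ s in Set.Iic u, stdPhi s

/-- Standard normal survivor function. -/
noncomputable def stdSurv (u : ℝ) : ℝ := 1 - stdCdf u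

lemma stdPhi_pos (u : ℝ) : 0 < stdPhi u := by
  apply mul_pos (inv_pos.2 (Real.sqrt_pos.2 (by positivity))) (Real.exp_pos _)

lemma stdPhi_eq (u : ℝ) : stdPhi u = (Real.sqrt (2 * Real.pi))⁻¹ * Real.exp (-(2⁻¹ : ℝ) * u ^ 2) := by
  unfold stdPhi; ring_nf

lemma continuous_stdPhi : Continuous stdPhi := by
  unfold stdPhi; fun_prop

lemma integrable_stdPhi : Integrable stdPhi := by
  have h := (integrable_exp_neg_mul_sq (by norm_num : (0:ℝ) < 2⁻¹)).const_mul (Real.sqrt (2 * Real.pi))⁻¹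
  apply h.congr
  filter_upwards with u
  rw [stdPhi_eq]

lemma integral_stdPhi : ∫ s, stdPhi s = 1 := by
  have h : ∫ s, stdPhi s = (Real.sqrt (2 * Real.pi))⁻¹ * ∫ s : ℝ, Real.exp (-(2⁻¹:ℝ) * s ^ 2) := by
    rw [← integral_const_mul]
    congr 1; funext s; rw [stdPhi_eq]
  rw [h, integral_gaussian]
  have : Real.pi / 2⁻¹ = 2 * Real.pi := by ring
  rw [this, inv_mul_cancel₀ (by positivity)]

lemma stdSurv_eq (u : ℝ) : stdSurv u = ∫ s in Set.Ioi u, stdPhi s := by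
  have := intervalIntegral.integral_Iic_add_Ioi (μ := volume) (b := u)
    integrable_stdPhi.integrableOn integrable_stdPhi.integrableOn
  rw [integral_stdPhi] at this
  unfold stdSurv stdCdf
  linarith

lemma hasDerivAt_stdPhi (u : ℝ) : HasDerivAt stdPhi (-u * stdPhi u) u := by
  have h1 : HasDerivAt (fun v : ℝ => -v ^ 2 / 2) (-u) u := by
    have := ((hasDerivAt_pow 2 u).neg).div_const 2
    simpa using this.congr_deriv (by ring)
  have h2 := (h1.exp).const_mul (Real.sqrt (2 * Real.pi))⁻¹
  unfold stdPhi
  exact h2.congr_deriv (by ring)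

lemma stdSurv_nonneg (u : ℝ) : 0 ≤ stdSurv u := by
  rw [stdSurv_eq]
  exact setIntegral_nonneg measurableSet_Ioi (fun s _ => (stdPhi_pos s).le)

lemma stdCdf_sub (a b : ℝ) : stdCdf b - stdCdf a = ∫ s in a..b, stdPhi s := by
  exact intervalIntegral.integral_Iic_sub_Iic integrable_stdPhi.integrableOn
    integrable_stdPhi.integrableOn

lemma hasDerivAt_stdCdf (u : ℝ) : HasDerivAt stdCdf (stdPhi u) u := by
  have h : HasDerivAt (fun v => stdCdf 0 + ∫ s in (0:ℝ)..v, stdPhi s) (stdPhi u) u := by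
    refine HasDerivAt.const_add _ ?_
    exact intervalIntegral.integral_hasDerivAt_right
      (integrable_stdPhi.intervalIntegrable)
      (continuous_stdPhi.stronglyMeasurableAtFilter _ _)
      continuous_stdPhi.continuousAt
  refine h.congr_of_eventuallyEq ?_
  filter_upwards with v
  rw [← stdCdf_sub 0 v]; ring

lemma hasDerivAt_stdSurv (u : ℝ) : HasDerivAt stdSurv (-stdPhi u) u := by
  exact ((hasDerivAt_stdCdf u).const_sub 1)

lemma integrable_mul_stdPhi : Integrable (fun s => s * stdPhi s) := by
  have h := (integrable_mul_exp_neg_mul_sq (by norm_num : (0:ℝ) < 2⁻¹)).const_mul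
    (Real.sqrt (2 * Real.pi))⁻¹
  apply h.congr
  filter_upwards with u
  rw [stdPhi_eq]; ring

lemma integral_Ioi_mul_stdPhi (u : ℝ) : ∫ s in Set.Ioi u, s * stdPhi s = stdPhi u := by
  have h := integral_Ioi_of_hasDerivAt_of_tendsto' (f := fun s => -stdPhi s)
    (f' := fun s => s * stdPhi s) (a := u) (m := 0)
    (fun s _ => (hasDerivAt_stdPhi s).neg.congr_deriv (by ring))
    integrable_mul_stdPhi.integrableOn ?_
  · simpa using h
  · have : Tendsto stdPhi atTop (nhds 0) := by
      have h1 : Tendsto (fun s : ℝ => -s ^ 2 / 2) atTop atBot := by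
        apply Tendsto.atBot_div_const (by norm_num)
        simpa using (tendsto_pow_atTop (by norm_num : 2 ≠ 0)).neg
      have := (Real.tendsto_exp_atBot.comp h1).const_mul (Real.sqrt (2 * Real.pi))⁻¹
      rw [mul_zero] at this
      apply this.congr
      intro s
      simp [stdPhi, Function.comp]
    simpa using this.neg

lemma mills_key (u : ℝ) : u * stdSurv u ≤ stdPhi u := by
  rcases le_or_gt u 0 with hu | hu
  · exact le_trans (mul_nonpos_of_nonpos_of_nonneg hu (stdSurv_nonneg u)) (stdPhi_pos u).le
  · rw [stdSurv_eq, ← integral_const_mul, ← integral_Ioi_mul_stdPhi u]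
    apply setIntegral_mono_on
    · exact (integrable_stdPhi.integrableOn).const_mul u
    · exact integrable_mul_stdPhi.integrableOn
    · exact measurableSet_Ioi
    · intro s hs
      exact mul_le_mul_of_nonneg_right (le_of_lt hs) (stdPhi_pos s).le

noncomputable def mills (u : ℝ) : ℝ := stdSurv u / stdPhi u

lemma hasDerivAt_mills (u : ℝ) : HasDerivAt mills (u * mills u - 1) u := by
  have h := (hasDerivAt_stdSurv u).div (hasDerivAt_stdPhi u) (stdPhi_pos u).ne'
  apply h.congr_deriv
  unfold mills
  have hp := (stdPhi_pos u).ne'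
  field_simp
  ring

lemma mills_anti : Antitone mills := by
  apply antitone_of_deriv_nonpos
  · exact fun u => (hasDerivAt_mills u).differentiableAt
  · intro u
    rw [(hasDerivAt_mills u).deriv]
    have := mills_key u
    have hp := stdPhi_pos u
    have : u * mills u ≤ 1 := by
      unfold mills
      rw [mul_div_assoc'] at *
      exact (div_le_one hp).2 (by linarith)
    linarith

noncomputable def fFun (x y : ℝ) : ℝ := stdSurv (x - y) - Real.exp (2 * x * y) * stdSurv (x + y)

noncomputable def gFun (x y : ℝ) : ℝ := 1 - x * stdSurv (x + y) / stdPhi (x + y)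


lemma gFun_eq (x y : ℝ) : gFun x y = 1 - x * mills (x + y) := by
  unfold gFun mills; ring

lemma gFun_mono (x : ℝ) (hx : 0 ≤ x) {a b : ℝ} (hab : a ≤ b) : gFun x a ≤ gFun x b := by
  rw [gFun_eq, gFun_eq]
  have := mills_anti (by linarith : x + a ≤ x + b)
  nlinarith

lemma exp_phi (x t : ℝ) : Real.exp (2 * x * t) * stdPhi (x + t) = stdPhi (x - t) := by
  unfold stdPhi
  rw [mul_left_comm, ← Real.exp_add]
  ring_nf

lemma continuous_gFun (x : ℝ) : Continuous (fun t => gFun x t) := by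
  have hc : Continuous stdCdf :=
    continuous_iff_continuousAt.2 fun u => (hasDerivAt_stdCdf u).continuousAt
  have hS : Continuous stdSurv := continuous_const.sub hc
  unfold gFun
  exact continuous_const.sub (((continuous_const.mul
    (hS.comp (continuous_const.add continuous_id))).div
    (continuous_stdPhi.comp (continuous_const.add continuous_id))
    (fun t => (stdPhi_pos (x + t)).ne')))

lemma hasDerivAt_fFun (x t : ℝ) :
    HasDerivAt (fun y => fFun x y) (2 * stdPhi (x - t) * gFun x t) t := by
  have h1 : HasDerivAt (fun y : ℝ => stdSurv (x - y)) (stdPhi (x - t)) t := by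
    have := (hasDerivAt_stdSurv (x - t)).comp t ((hasDerivAt_id t).const_sub x)
    simpa [Function.comp_def] using this
  have h2 : HasDerivAt (fun y : ℝ => Real.exp (2 * x * y))
      (2 * x * Real.exp (2 * x * t)) t := by
    have := (hasDerivAt_id t).const_mul (2 * x)
    simpa [mul_comm] using (this.exp)
  have h3 : HasDerivAt (fun y : ℝ => stdSurv (x + y)) (-stdPhi (x + t)) t := by
    have := (hasDerivAt_stdSurv (x + t)).comp t ((hasDerivAt_id t).const_add x)
    simpa [Function.comp_def] using this
  have h := h1.sub (h2.mul h3)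
  apply h.congr_deriv
  have he : Real.exp (2 * x * t) = stdPhi (x - t) / stdPhi (x + t) := by
    rw [eq_div_iff (stdPhi_pos (x + t)).ne', exp_phi]
  rw [he]
  unfold gFun
  have := (stdPhi_pos (x + t)).ne'
  field_simp
  ring

/-- Two-sided estimate for f in the case x ≥ 0. -/
theorem fFun_bounds_of_nonneg (x y : ℝ) (hx : 0 ≤ x) (hy : 0 ≤ y) :
    2 * gFun x 0 * (stdCdf x - stdCdf (x - y)) ≤ fFun x y ∧
      fFun x y ≤ 2 * gFun x y * (stdCdf x - stdCdf (x - y)) := by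
  have hcont : Continuous (fun t => 2 * stdPhi (x - t) * gFun x t) := by
    exact ((continuous_const.mul (continuous_stdPhi.comp
      (continuous_const.sub continuous_id))).mul (continuous_gFun x))
  have hcontphi : Continuous (fun t : ℝ => stdPhi (x - t)) :=
    continuous_stdPhi.comp (continuous_const.sub continuous_id)
  have hfInt : fFun x y = ∫ t in (0:ℝ)..y, 2 * stdPhi (x - t) * gFun x t := by
    have h := intervalIntegral.integral_eq_sub_of_hasDerivAt
      (f := fun y => fFun x y) (f' := fun t => 2 * stdPhi (x - t) * gFun x t)
      (a := 0) (b := y) (fun t _ => hasDerivAt_fFun x t)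
      (hcont.intervalIntegrable 0 y)
    rw [h]
    simp [fFun]
  have hGInt : stdCdf x - stdCdf (x - y) = ∫ t in (0:ℝ)..y, stdPhi (x - t) := by
    have h := intervalIntegral.integral_eq_sub_of_hasDerivAt
      (f := fun y => -stdCdf (x - y)) (f' := fun t => stdPhi (x - t))
      (a := 0) (b := y) ?_ (hcontphi.intervalIntegrable 0 y)
    · rw [h]; ring_nf
    · intro t _
      have := ((hasDerivAt_stdCdf (x - t)).comp t ((hasDerivAt_id t).const_sub x)).neg
      exact this.congr_deriv (by ring)
  constructor
  · rw [hfInt, hGInt, ← intervalIntegral.integral_const_mul]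
    apply intervalIntegral.integral_mono_on hy
    · exact (continuous_const.mul hcontphi).intervalIntegrable 0 y
    · exact hcont.intervalIntegrable 0 y
    · intro t ht
      have hg := gFun_mono x hx ht.1
      have hp := stdPhi_pos (x - t)
      nlinarith
  · rw [hfInt, hGInt, ← intervalIntegral.integral_const_mul]
    apply intervalIntegral.integral_mono_on hy
    · exact hcont.intervalIntegrable 0 y
    · exact (continuous_const.mul hcontphi).intervalIntegrable 0 y
    · intro t ht
      have hg := gFun_mono x hx ht.2
      have hp := stdPhi_pos (x - t)
      nlinarith
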